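/- Discrete Noether theorem for SE(3) (3D): assume the 3D cell Lagrangian L satisfies L(Rx₁+c, …, Rx₁₆+c) = L(x₁, …, x₁₆) for every rotation matrix R ∈ SO(3), every c ∈ ℝ³, and all (x₁,…,x₁₆) ∈ (ℝ³)¹⁶. If the discrete field φ satisfies the 3D discrete Euler–Lagrange node equations at every node (j,a,b,c) with 0 < j < N, then for all 0 ≤ j ≤ N−2: 𝐉_l^{j+1} = 𝐉_l^j and 𝐉_r^{j+1} = 𝐉_r^j, where 𝐉_l^j := Σ_{cells □^j at time level j} Σ_{p ∈ {2,4,…,16}} D_pL(j¹φ(□^j)) ∈ ℝ³ and 𝐉_r^j := Σ_{cells □^j at time level j} Σ_{p ∈ {2,4,…,16}} x_p × D_pL(j¹φ(□^j)) ∈ ℝ³, with x_p the p-th slot entry of j¹φ(□^j) and × the cross product on ℝ³. -/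

import Mathlib

noncomputable section

/-- The space `ℝ³` as a Euclidean space. -/
abbrev E3 : Type := EuclideanSpace ℝ (Fin 3)

/-- Partial gradient `D_pL ∈ ℝ³` of a cell Lagrangian `L` in its `p`-th slot. -/
noncomputable def pgrad3 {k : ℕ} (L : (Fin k → E3) → ℝ) (x : Fin k → E3) (p : Fin k) : E3 :=
  gradient (fun y => L (Function.update x p y)) (x p)

/-- Cross product on `ℝ³`. -/
def cross3 (u v : E3) : E3 :=
  WithLp.toLp 2 ![u 1 * v 2 - u 2 * v 1, u 2 * v 0 - u 0 * v 2, u 0 * v 1 - u 1 * v 0]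

/-- `a`-offsets of the 16 slots of a 3D cell (slots `0,…,15` correspond to the paper's
slots `1,…,16`; slot `2m` is the time-`j` value and slot `2m+1` the time-`j+1` value at
the `m`-th spatial node `(a,b,c), (a+1,b,c), (a,b+1,c), (a,b,c+1), (a+1,b+1,c),
(a,b+1,c+1), (a+1,b,c+1), (a+1,b+1,c+1)`). -/
def offA : Fin 16 → ℕ := ![0,0,1,1,0,0,0,0,1,1,0,0,1,1,1,1]
/-- `b`-offsets of the 16 slots of a 3D cell. -/
def offB : Fin 16 → ℕ := ![0,0,0,0,1,1,0,0,1,1,1,1,0,0,1,1]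
/-- `c`-offsets of the 16 slots of a 3D cell. -/
def offC : Fin 16 → ℕ := ![0,0,0,0,0,0,1,1,0,0,1,1,1,1,1,1]

/-- The node of the 3D cell `□^j_{a,b,c}` occupied by slot `s`. -/
def cellNode3 (j a b c : ℕ) (s : Fin 16) : ℕ × ℕ × ℕ × ℕ :=
  (j + s.val % 2, a + offA s, b + offB s, c + offC s)

/-- First jet of the discrete field on the 3D cell `□^j_{a,b,c}`. -/
def jet3 (φ : ℕ → ℕ → ℕ → ℕ → E3) (j a b c : ℕ) : Fin 16 → E3 :=
  fun s => φ (j + s.val % 2) (a + offA s) (b + offB s) (c + offC s)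

/-- Sum of `D_pL(j¹φ(□))` over all pairs `(□, p)` such that the given node is incident
to the 3D cell `□` in slot `p`. -/
noncomputable def delSum3 (N A B C : ℕ) (L : (Fin 16 → E3) → ℝ)
    (φ : ℕ → ℕ → ℕ → ℕ → E3) (nd : ℕ × ℕ × ℕ × ℕ) : E3 :=
  ∑ j' ∈ Finset.range N, ∑ a' ∈ Finset.range A, ∑ b' ∈ Finset.range B,
    ∑ c' ∈ Finset.range C, ∑ s : Fin 16,
      if cellNode3 j' a' b' c' s = nd then pgrad3 L (jet3 φ j' a' b' c') s else 0

/-- The even paper slots `2, 4, …, 16` (odd slots `1, 3, …, 15` here), carrying the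
time-`(j+1)` values. -/
def evenSlot (m : Fin 8) : Fin 16 := ⟨2 * m.val + 1, by omega⟩

/-- Total discrete linear momentum at time level `j` (3D). -/
noncomputable def Jlin3 (A B C : ℕ) (L : (Fin 16 → E3) → ℝ)
    (φ : ℕ → ℕ → ℕ → ℕ → E3) (j : ℕ) : E3 :=
  ∑ a ∈ Finset.range A, ∑ b ∈ Finset.range B, ∑ c ∈ Finset.range C,
    ∑ m : Fin 8, pgrad3 L (jet3 φ j a b c) (evenSlot m)

/-- Total discrete angular momentum at time level `j` (3D). -/
noncomputable def Jang3 (A B C : ℕ) (L : (Fin 16 → E3) → ℝ)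
    (φ : ℕ → ℕ → ℕ → ℕ → E3) (j : ℕ) : E3 :=
  ∑ a ∈ Finset.range A, ∑ b ∈ Finset.range B, ∑ c ∈ Finset.range C,
    ∑ m : Fin 8,
      cross3 (jet3 φ j a b c (evenSlot m)) (pgrad3 L (jet3 φ j a b c) (evenSlot m))



section NoetherAux

open NormedSpace
open scoped Matrix

attribute [local instance] Matrix.linftyOpNormedRing Matrix.linftyOpNormedAlgebra

lemma pgrad_inner {k : ℕ} (L : (Fin k → E3) → ℝ) (hL : Differentiable ℝ L)
    (x : Fin k → E3) (p : Fin k) (v : E3) :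
    inner ℝ (pgrad3 L x p) v = fderiv ℝ L x (Pi.single p v) := by
  have hupd : HasFDerivAt (fun y : E3 => Function.update x p y)
      (LinearMap.toContinuousLinearMap (LinearMap.single ℝ (fun _ : Fin k => E3) p)) (x p) := by
    have h : (fun y : E3 => Function.update x p y)
        = fun y => (LinearMap.toContinuousLinearMap
            (LinearMap.single ℝ (fun _ : Fin k => E3) p)) y + (x - Pi.single p (x p)) := by
      funext y
      ext q i
      by_cases h : q = p <;> simp [Function.update, h, Pi.single_apply]
    rw [h]
    exact (LinearMap.toContinuousLinearMap _).hasFDerivAt.add_const _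
  have hcomp := ((hL (Function.update x p (x p))).hasFDerivAt).comp (x p) hupd
  rw [Function.update_eq_self] at hcomp
  have : pgrad3 L x p = (InnerProductSpace.toDual ℝ E3).symm
      ((fderiv ℝ L x).comp (LinearMap.toContinuousLinearMap
          (LinearMap.single ℝ (fun _ : Fin k => E3) p))) := by
    rw [pgrad3, gradient]
    congr 1
    exact (hcomp : HasFDerivAt (fun y => L (Function.update x p y)) _ _).fderiv
  rw [this, InnerProductSpace.toDual_symm_apply]
  simp
lemma sum_pgrad3_eq_zero {k : ℕ} (L : (Fin k → E3) → ℝ) (hL : Differentiable ℝ L)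
    (hinv : ∀ (c : E3) (x : Fin k → E3), L (fun p => x p + c) = L x) (x : Fin k → E3) :
    ∑ p : Fin k, pgrad3 L x p = 0 := by
  set D : E3 →L[ℝ] (Fin k → E3) := ContinuousLinearMap.pi (fun _ : Fin k => ContinuousLinearMap.id ℝ E3) with hD
  have hF : HasFDerivAt (fun c : E3 => (fun p => x p + c)) D 0 := by
    have h : (fun c : E3 => (fun p => x p + c)) = fun c => D c + x := by
      funext c; ext p i; simp [hD]; ring
    rw [h]
    exact D.hasFDerivAt.add_const _
  have hcomp := ((hL (fun p => x p + (0:E3))).hasFDerivAt).comp (0:E3) hF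
  have hx0 : (fun p => x p + (0:E3)) = x := by funext p; simp
  rw [hx0] at hcomp
  have hconst : (fun c : E3 => L (fun p => x p + c)) = fun _ => L x :=
    funext (fun c => hinv c x)
  have hzero : ((fderiv ℝ L x).comp D) = 0 := by
    have h2 : HasFDerivAt (fun _ : E3 => L x) ((fderiv ℝ L x).comp D) 0 := by
      rw [← hconst]; exact hcomp
    exact h2.unique (hasFDerivAt_const _ _)
  have hv : ∀ v : E3, inner ℝ (∑ p : Fin k, pgrad3 L x p) v = (0:ℝ) := by
    intro v
    have h3 : (fun _ : Fin k => v) = ∑ p : Fin k, Pi.single p v := by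
      rw [Finset.univ_sum_single (fun _ : Fin k => v)]
    have h4 : fderiv ℝ L x (fun _ => v) = 0 := by
      have := congrFun (congrArg (fun (T : E3 →L[ℝ] ℝ) => (T : E3 → ℝ)) hzero) v
      simpa [hD] using this
    rw [sum_inner]
    simp_rw [pgrad_inner L hL x _ v]
    rw [← map_sum, ← h3, h4]
  have := hv (∑ p : Fin k, pgrad3 L x p)
  exact inner_self_eq_zero.mp this

/-- skew matrix of ω -/
def wmat (ω : E3) : Matrix (Fin 3) (Fin 3) ℝ :=
  !![0, -ω 2, ω 1; ω 2, 0, -ω 0; -ω 1, ω 0, 0]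

lemma wmat_skew (ω : E3) : (wmat ω)ᵀ = -(wmat ω) := by
  ext i j; fin_cases i <;> fin_cases j <;> simp [wmat]

lemma exp_skew_mem (Ω : Matrix (Fin 3) (Fin 3) ℝ) (hskew : Ωᵀ = -Ω) (t : ℝ) :
    exp (t • Ω) ∈ Matrix.specialOrthogonalGroup (Fin 3) ℝ := by
  have horth : ∀ s : ℝ, star (exp (s • Ω)) * exp (s • Ω) = 1 := by
    intro s
    have h1 : star (exp (s • Ω)) = exp (-(s • Ω)) := by
      rw [Matrix.star_eq_conjTranspose, Matrix.conjTranspose_eq_transpose_of_trivial,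
        ← Matrix.exp_transpose, Matrix.transpose_smul, hskew, smul_neg]
    rw [h1, ← Matrix.exp_add_of_commute (-(s • Ω)) (s • Ω) (Commute.neg_left rfl), neg_add_cancel, exp_zero]
  have hcont : Continuous (fun s : ℝ => (exp (s • Ω)).det) := by
    have : Differentiable ℝ (fun s : ℝ => exp (s • Ω)) :=
      fun s => (hasDerivAt_exp_smul_const Ω s).differentiableAt
    exact this.continuous.matrix_det
  have hsq : ∀ s : ℝ, ((exp (s • Ω)).det) ^ 2 = 1 := by
    intro s
    have := congrArg Matrix.det (horth s)
    rwa [Matrix.det_mul, Matrix.star_eq_conjTranspose,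
      Matrix.conjTranspose_eq_transpose_of_trivial, Matrix.det_transpose,
      Matrix.det_one, ← sq] at this
  have hdet : (exp (t • Ω)).det = 1 := by
    by_contra h
    have hm : (exp (t • Ω)).det = -1 := by
      have h2 := hsq t
      have : ((exp (t • Ω)).det - 1) * ((exp (t • Ω)).det + 1) = 0 := by ring_nf; nlinarith
      rcases mul_eq_zero.mp this with h3 | h3
      · exact absurd (by linarith) h
      · linarith
    have h0 : (0:ℝ) ∈ Set.uIcc ((fun s : ℝ => (exp (s • Ω)).det) 0)
        ((fun s : ℝ => (exp (s • Ω)).det) t) := by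
      simp only [zero_smul, exp_zero, Matrix.det_one, hm]
      rw [Set.uIcc_of_ge (by norm_num)]
      constructor <;> norm_num
    obtain ⟨s, _, hs⟩ := intermediate_value_uIcc (hcont.continuousOn) h0
    have := hsq s
    simp only at hs
    rw [hs] at this; norm_num at this
  exact (Matrix.mem_specialOrthogonalGroup_iff).mpr
    ⟨(Matrix.mem_orthogonalGroup_iff' (Fin 3) ℝ).mpr (horth t), hdet⟩
lemma inner_wmat (ω u g : E3) :
    (inner ℝ g (Matrix.toEuclideanLin (wmat ω) u) : ℝ) = inner ℝ ω (cross3 u g) := by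
  simp [Matrix.toEuclideanLin_apply, Matrix.mulVec, dotProduct, PiLp.inner_apply,
    Fin.sum_univ_three, cross3, wmat, PiLp.toLp_apply]
  ring
lemma sum_cross_pgrad3_eq_zero {k : ℕ} (L : (Fin k → E3) → ℝ)
    (hL : Differentiable ℝ L)
    (hinv : ∀ (R : Matrix.specialOrthogonalGroup (Fin 3) ℝ) (x : Fin k → E3),
      L (fun p => Matrix.toEuclideanLin (R : Matrix (Fin 3) (Fin 3) ℝ) (x p)) = L x)
    (x : Fin k → E3) :
    ∑ p : Fin k, cross3 (x p) (pgrad3 L x p) = 0 := by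
  have hv : ∀ ω : E3, (inner ℝ ω (∑ p : Fin k, cross3 (x p) (pgrad3 L x p)) : ℝ) = 0 := by
    intro ω
    set Ω : Matrix (Fin 3) (Fin 3) ℝ := wmat ω with hΩ
    let T : Matrix (Fin 3) (Fin 3) ℝ →ₗ[ℝ] (Fin k → E3) :=
      LinearMap.pi (fun p => (LinearMap.applyₗ (x p)).comp Matrix.toEuclideanLin.toLinearMap)
    let Tc : Matrix (Fin 3) (Fin 3) ℝ →L[ℝ] (Fin k → E3) := LinearMap.toContinuousLinearMap T
    have hTc : ∀ M : Matrix (Fin 3) (Fin 3) ℝ,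
        Tc M = fun p => Matrix.toEuclideanLin M (x p) := fun M => rfl
    have hexp : HasDerivAt (fun t : ℝ => exp (t • Ω)) Ω 0 := by
      have := hasDerivAt_exp_smul_const (𝕂 := ℝ) Ω 0
      simp only [zero_smul, exp_zero, one_mul] at this; exact this
    have hF : HasDerivAt (fun t : ℝ => Tc (exp (t • Ω))) (Tc Ω) 0 :=
      Tc.hasFDerivAt.comp_hasDerivAt 0 hexp
    have hT0 : Tc (exp ((0:ℝ) • Ω)) = x := by
      rw [hTc]
      funext p
      simp [Matrix.toEuclideanLin_apply, Matrix.one_mulVec]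
    have hcomp := (hL (Tc (exp ((0:ℝ) • Ω)))).hasFDerivAt.comp_hasDerivAt 0 hF
    rw [hT0] at hcomp
    have hconst : (fun t : ℝ => L (Tc (exp (t • Ω)))) = fun _ => L x := by
      funext t
      rw [hTc]
      exact hinv ⟨exp (t • Ω), exp_skew_mem Ω (wmat_skew ω) t⟩ x
    have hzero : fderiv ℝ L x (Tc Ω) = 0 := by
      have h2 : HasDerivAt (fun _ : ℝ => L x) (fderiv ℝ L x (Tc Ω)) 0 := by
        rw [← hconst]; exact hcomp
      exact h2.unique (hasDerivAt_const _ _)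
    have hsingle : Tc Ω = ∑ p : Fin k, Pi.single p (Matrix.toEuclideanLin Ω (x p)) := by
      rw [hTc, ← Finset.univ_sum_single (fun p => Matrix.toEuclideanLin Ω (x p))]
    rw [hsingle, map_sum] at hzero
    have hterm : ∀ p : Fin k, fderiv ℝ L x (Pi.single p (Matrix.toEuclideanLin Ω (x p)))
        = inner ℝ ω (cross3 (x p) (pgrad3 L x p)) := by
      intro p
      rw [← pgrad_inner L hL x p, inner_wmat]
    rw [inner_sum]
    rw [Finset.sum_congr rfl (fun p _ => (hterm p).symm)]
    exact hzero
  have := hv (∑ p : Fin k, cross3 (x p) (pgrad3 L x p))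
  exact inner_self_eq_zero.mp this

def oddSlot (m : Fin 8) : Fin 16 := ⟨2 * m.val, by omega⟩

lemma offA_le (s : Fin 16) : offA s ≤ 1 := by fin_cases s <;> decide
lemma offB_le (s : Fin 16) : offB s ≤ 1 := by fin_cases s <;> decide
lemma offC_le (s : Fin 16) : offC s ≤ 1 := by fin_cases s <;> decide

lemma slot_split (f : Fin 16 → E3) :
    ∑ s : Fin 16, f s = (∑ m : Fin 8, f (oddSlot m)) + ∑ m : Fin 8, f (evenSlot m) := by
  rw [← Equiv.sum_comp (finProdFinEquiv : Fin 8 × Fin 2 ≃ Fin 16) f, Fintype.sum_prod_type]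
  rw [← Finset.sum_add_distrib]
  refine Finset.sum_congr rfl fun m _ => ?_
  rw [Fin.sum_univ_two]
  congr 1 <;> · congr 1; ext; simp [finProdFinEquiv, oddSlot, evenSlot]; try ring

lemma oddSlot_mod (m : Fin 8) : (oddSlot m).val % 2 = 0 := by simp [oddSlot, Nat.mul_mod_right]
lemma evenSlot_mod (m : Fin 8) : (evenSlot m).val % 2 = 1 := by
  simp [evenSlot, Nat.add_mod, Nat.mul_mod_right]

lemma slot_collapse (H : Fin 16 → E3) (j' jt : ℕ) :
    (∑ s : Fin 16, if j' + s.val % 2 = jt then H s else 0)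
    = (if j' = jt then ∑ m : Fin 8, H (oddSlot m) else 0)
      + (if j' + 1 = jt then ∑ m : Fin 8, H (evenSlot m) else 0) := by
  rw [slot_split]
  congr 1
  · simp only [oddSlot_mod, add_zero]
    split_ifs <;> simp
  · simp only [evenSlot_mod]
    split_ifs <;> simp

lemma move_in {M : Type*} [AddCommMonoid M] (sa tj ta tb tc : Finset ℕ)
    (g : ℕ → ℕ → ℕ → ℕ → ℕ → Fin 16 → M) :
    (∑ a ∈ sa, ∑ j' ∈ tj, ∑ a' ∈ ta, ∑ b' ∈ tb, ∑ c' ∈ tc, ∑ s : Fin 16, g a j' a' b' c' s)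
    = ∑ j' ∈ tj, ∑ a' ∈ ta, ∑ b' ∈ tb, ∑ c' ∈ tc, ∑ s : Fin 16, ∑ a ∈ sa, g a j' a' b' c' s := by
  rw [Finset.sum_comm]
  refine Finset.sum_congr rfl fun j' _ => ?_
  rw [Finset.sum_comm]
  refine Finset.sum_congr rfl fun a' _ => ?_
  rw [Finset.sum_comm]
  refine Finset.sum_congr rfl fun b' _ => ?_
  rw [Finset.sum_comm]
  refine Finset.sum_congr rfl fun c' _ => ?_
  rw [Finset.sum_comm]

lemma sum_if_const {M : Type*} [AddCommMonoid M] {P : Prop} [Decidable P] (s : Finset ℕ)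
    (f : ℕ → M) : (∑ x ∈ s, if P then f x else 0) = if P then ∑ x ∈ s, f x else 0 := by
  split_ifs <;> simp

lemma node_collapse (Ab Bb Cb jt j' a' b' c' : ℕ) (ha : a' < Ab) (hb : b' < Bb) (hc : c' < Cb)
    (s : Fin 16) (v : E3) :
    (∑ a ∈ Finset.range (Ab+1), ∑ b ∈ Finset.range (Bb+1), ∑ c ∈ Finset.range (Cb+1),
      if cellNode3 j' a' b' c' s = (jt, a, b, c) then v else 0)
    = if j' + s.val % 2 = jt then v else 0 := by
  have hA : a' + offA s ∈ Finset.range (Ab+1) := by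
    have := offA_le s; simp only [Finset.mem_range]; omega
  have hB : b' + offB s ∈ Finset.range (Bb+1) := by
    have := offB_le s; simp only [Finset.mem_range]; omega
  have hC : c' + offC s ∈ Finset.range (Cb+1) := by
    have := offC_le s; simp only [Finset.mem_range]; omega
  simp only [cellNode3, Prod.mk.injEq, ite_and]
  by_cases ht : j' + s.val % 2 = jt
  · simp only [ht, if_true]
    simp only [sum_if_const]
    rw [Finset.sum_ite_eq, if_pos hA, Finset.sum_ite_eq, if_pos hB, Finset.sum_ite_eq, if_pos hC]
  · simp [ht]



/-- `cross3 u` as a linear map. -/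
noncomputable def crossLm (u : E3) : E3 →ₗ[ℝ] E3 where
  toFun v := cross3 u v
  map_add' v w := by
    apply PiLp.ext
    intro i
    fin_cases i <;> simp [cross3, PiLp.toLp_apply] <;> ring
  map_smul' r v := by
    apply PiLp.ext
    intro i
    fin_cases i <;> simp [cross3, PiLp.toLp_apply] <;> ring

lemma crossLm_apply (u v : E3) : crossLm u v = cross3 u v := rfl

lemma comb_key (N A B C : ℕ) (H : ℕ → ℕ → ℕ → ℕ → Fin 16 → E3)
    (hcell : ∀ j a b c : ℕ, ∑ s : Fin 16, H j a b c s = 0)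
    (j : ℕ) (hj : j + 2 ≤ N)
    (hnode : ∀ a b c : ℕ, a ≤ A → b ≤ B → c ≤ C →
      (∑ j' ∈ Finset.range N, ∑ a' ∈ Finset.range A, ∑ b' ∈ Finset.range B,
        ∑ c' ∈ Finset.range C, ∑ s : Fin 16,
          if cellNode3 j' a' b' c' s = (j+1, a, b, c) then H j' a' b' c' s else 0) = 0) :
    (∑ a ∈ Finset.range A, ∑ b ∈ Finset.range B, ∑ c ∈ Finset.range C,
      ∑ m : Fin 8, H (j+1) a b c (evenSlot m))
    = ∑ a ∈ Finset.range A, ∑ b ∈ Finset.range B, ∑ c ∈ Finset.range C,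
      ∑ m : Fin 8, H j a b c (evenSlot m) := by
  -- the big node sum
  have hT : (∑ a ∈ Finset.range (A+1), ∑ b ∈ Finset.range (B+1), ∑ c ∈ Finset.range (C+1),
      ∑ j' ∈ Finset.range N, ∑ a' ∈ Finset.range A, ∑ b' ∈ Finset.range B,
        ∑ c' ∈ Finset.range C, ∑ s : Fin 16,
          if cellNode3 j' a' b' c' s = (j+1, a, b, c) then H j' a' b' c' s else 0) = 0 := by
    refine Finset.sum_eq_zero fun a ha => Finset.sum_eq_zero fun b hb =>
      Finset.sum_eq_zero fun c hc => ?_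
    exact hnode a b c (by have := Finset.mem_range.mp ha; omega)
      (by have := Finset.mem_range.mp hb; omega) (by have := Finset.mem_range.mp hc; omega)
  have hswap : (∑ a ∈ Finset.range (A+1), ∑ b ∈ Finset.range (B+1), ∑ c ∈ Finset.range (C+1),
      ∑ j' ∈ Finset.range N, ∑ a' ∈ Finset.range A, ∑ b' ∈ Finset.range B,
        ∑ c' ∈ Finset.range C, ∑ s : Fin 16,
          if cellNode3 j' a' b' c' s = (j+1, a, b, c) then H j' a' b' c' s else 0)
      = ∑ j' ∈ Finset.range N, ∑ a' ∈ Finset.range A, ∑ b' ∈ Finset.range B,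
        ∑ c' ∈ Finset.range C, ∑ s : Fin 16, ∑ a ∈ Finset.range (A+1),
          ∑ b ∈ Finset.range (B+1), ∑ c ∈ Finset.range (C+1),
          if cellNode3 j' a' b' c' s = (j+1, a, b, c) then H j' a' b' c' s else 0 := by
    calc (∑ a ∈ Finset.range (A+1), ∑ b ∈ Finset.range (B+1), ∑ c ∈ Finset.range (C+1),
      ∑ j' ∈ Finset.range N, ∑ a' ∈ Finset.range A, ∑ b' ∈ Finset.range B,
        ∑ c' ∈ Finset.range C, ∑ s : Fin 16,
          if cellNode3 j' a' b' c' s = (j+1, a, b, c) then H j' a' b' c' s else 0)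
        = ∑ a ∈ Finset.range (A+1), ∑ b ∈ Finset.range (B+1),
          ∑ j' ∈ Finset.range N, ∑ a' ∈ Finset.range A, ∑ b' ∈ Finset.range B,
          ∑ c' ∈ Finset.range C, ∑ s : Fin 16, ∑ c ∈ Finset.range (C+1),
          if cellNode3 j' a' b' c' s = (j+1, a, b, c) then H j' a' b' c' s else 0 :=
        Finset.sum_congr rfl fun a _ => Finset.sum_congr rfl fun b _ =>
          move_in _ _ _ _ _ (fun c j' a' b' c' s =>
            if cellNode3 j' a' b' c' s = (j+1, a, b, c) then H j' a' b' c' s else 0)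
      _ = ∑ a ∈ Finset.range (A+1),
          ∑ j' ∈ Finset.range N, ∑ a' ∈ Finset.range A, ∑ b' ∈ Finset.range B,
          ∑ c' ∈ Finset.range C, ∑ s : Fin 16, ∑ b ∈ Finset.range (B+1),
          ∑ c ∈ Finset.range (C+1),
          if cellNode3 j' a' b' c' s = (j+1, a, b, c) then H j' a' b' c' s else 0 :=
        Finset.sum_congr rfl fun a _ =>
          move_in _ _ _ _ _ (fun b j' a' b' c' s => ∑ c ∈ Finset.range (C+1),
            if cellNode3 j' a' b' c' s = (j+1, a, b, c) then H j' a' b' c' s else 0)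
      _ = _ :=
        move_in _ _ _ _ _ (fun a j' a' b' c' s => ∑ b ∈ Finset.range (B+1),
          ∑ c ∈ Finset.range (C+1),
          if cellNode3 j' a' b' c' s = (j+1, a, b, c) then H j' a' b' c' s else 0)
  rw [hswap] at hT
  have h2 : (∑ j' ∈ Finset.range N, ∑ a' ∈ Finset.range A, ∑ b' ∈ Finset.range B,
        ∑ c' ∈ Finset.range C, ∑ s : Fin 16, ∑ a ∈ Finset.range (A+1),
          ∑ b ∈ Finset.range (B+1), ∑ c ∈ Finset.range (C+1),
          if cellNode3 j' a' b' c' s = (j+1, a, b, c) then H j' a' b' c' s else 0)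
      = ∑ j' ∈ Finset.range N, ∑ a' ∈ Finset.range A, ∑ b' ∈ Finset.range B,
        ∑ c' ∈ Finset.range C, ∑ s : Fin 16,
          if j' + s.val % 2 = j + 1 then H j' a' b' c' s else 0 :=
    Finset.sum_congr rfl fun j' _ => Finset.sum_congr rfl fun a' ha' =>
      Finset.sum_congr rfl fun b' hb' => Finset.sum_congr rfl fun c' hc' =>
        Finset.sum_congr rfl fun s _ =>
          node_collapse A B C (j+1) j' a' b' c' (Finset.mem_range.mp ha')
            (Finset.mem_range.mp hb') (Finset.mem_range.mp hc') s _
  rw [h2] at hT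
  have h3 : (∑ j' ∈ Finset.range N, ∑ a' ∈ Finset.range A, ∑ b' ∈ Finset.range B,
        ∑ c' ∈ Finset.range C, ∑ s : Fin 16,
          if j' + s.val % 2 = j + 1 then H j' a' b' c' s else 0)
      = ∑ j' ∈ Finset.range N,
          ((if j' = j + 1 then (∑ a' ∈ Finset.range A, ∑ b' ∈ Finset.range B,
            ∑ c' ∈ Finset.range C, ∑ m : Fin 8, H j' a' b' c' (oddSlot m)) else 0)
          + (if j' + 1 = j + 1 then (∑ a' ∈ Finset.range A, ∑ b' ∈ Finset.range B,
            ∑ c' ∈ Finset.range C, ∑ m : Fin 8, H j' a' b' c' (evenSlot m)) else 0)) :=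
    Finset.sum_congr rfl fun j' _ => by
      simp only [slot_collapse, Finset.sum_add_distrib, sum_if_const]
  rw [h3, Finset.sum_add_distrib] at hT
  rw [Finset.sum_ite_eq' (Finset.range N) (j+1), if_pos (Finset.mem_range.mpr (by omega))] at hT
  simp only [add_left_inj] at hT
  rw [Finset.sum_ite_eq' (Finset.range N) j, if_pos (Finset.mem_range.mpr (by omega))] at hT
  have hOdd : (∑ a' ∈ Finset.range A, ∑ b' ∈ Finset.range B,
      ∑ c' ∈ Finset.range C, ∑ m : Fin 8, H (j+1) a' b' c' (oddSlot m))
      + (∑ a' ∈ Finset.range A, ∑ b' ∈ Finset.range B,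
      ∑ c' ∈ Finset.range C, ∑ m : Fin 8, H (j+1) a' b' c' (evenSlot m)) = 0 := by
    rw [← Finset.sum_add_distrib]
    refine Finset.sum_eq_zero fun a' _ => ?_
    rw [← Finset.sum_add_distrib]
    refine Finset.sum_eq_zero fun b' _ => ?_
    rw [← Finset.sum_add_distrib]
    refine Finset.sum_eq_zero fun c' _ => ?_
    rw [← slot_split (fun s => H (j+1) a' b' c' s)]
    exact hcell (j+1) a' b' c'
  have := hT
  -- hT : Odd(j+1) + Ev j = 0 ; hOdd : Odd(j+1) + Ev(j+1) = 0
  have h4 := sub_eq_zero.mpr (hOdd.trans hT.symm)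
  rw [add_sub_add_left_eq_sub, sub_eq_zero] at h4
  exact h4

end NoetherAux

/-- **Discrete Noether theorem for SE(3) (3D)**: if the 3D cell Lagrangian is invariant
under every rotation `R ∈ SO(3)` and every translation `c ∈ ℝ³` acting simultaneously on
all its slots, and `φ` satisfies the 3D discrete Euler–Lagrange node equations at every
node with `0 < j < N`, then the total discrete linear and angular momenta are conserved. -/
theorem discrete_noether_SE3_3D
    (N A B C : ℕ) (hN : 1 ≤ N) (hA : 1 ≤ A) (hB : 1 ≤ B) (hC : 1 ≤ C)
    (L : (Fin 16 → E3) → ℝ) (hL : Differentiable ℝ L)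
    (hinv : ∀ (R : Matrix.specialOrthogonalGroup (Fin 3) ℝ) (cc : E3) (x : Fin 16 → E3),
      L (fun p => Matrix.toEuclideanLin (R : Matrix (Fin 3) (Fin 3) ℝ) (x p) + cc) = L x)
    (φ : ℕ → ℕ → ℕ → ℕ → E3)
    (hDEL : ∀ j a b c : ℕ, 0 < j → j < N → a ≤ A → b ≤ B → c ≤ C →
      delSum3 N A B C L φ (j, a, b, c) = 0) :
    ∀ j : ℕ, j + 2 ≤ N →
      Jlin3 A B C L φ (j + 1) = Jlin3 A B C L φ j
        ∧ Jang3 A B C L φ (j + 1) = Jang3 A B C L φ j := by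
  -- derived invariances
  have htrans : ∀ (c : E3) (x : Fin 16 → E3), L (fun p => x p + c) = L x := by
    intro c x
    have h := hinv 1 c x
    have h1 : ∀ p : Fin 16, Matrix.toEuclideanLin ((1 : Matrix.specialOrthogonalGroup (Fin 3) ℝ) :
        Matrix (Fin 3) (Fin 3) ℝ) (x p) = x p := by
      intro p
      simp [Matrix.toEuclideanLin_apply, Matrix.one_mulVec]
    simpa only [h1] using h
  have hrot : ∀ (R : Matrix.specialOrthogonalGroup (Fin 3) ℝ) (x : Fin 16 → E3),
      L (fun p => Matrix.toEuclideanLin (R : Matrix (Fin 3) (Fin 3) ℝ) (x p)) = L x := by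
    intro R x
    simpa using hinv R 0 x
  intro j hj
  constructor
  · exact comb_key N A B C (fun j' a' b' c' s => pgrad3 L (jet3 φ j' a' b' c') s)
      (fun j' a' b' c' => sum_pgrad3_eq_zero L hL htrans (jet3 φ j' a' b' c'))
      j hj
      (fun a b c ha hb hc => hDEL (j+1) a b c (by omega) (by omega) ha hb hc)
  · -- angular momentum
    refine comb_key N A B C
      (fun j' a' b' c' s => cross3 (jet3 φ j' a' b' c' s) (pgrad3 L (jet3 φ j' a' b' c') s))
      (fun j' a' b' c' => sum_cross_pgrad3_eq_zero L hL hrot (jet3 φ j' a' b' c'))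
      j hj ?_
    intro a b c ha hb hc
    have h0 := hDEL (j+1) a b c (by omega) (by omega) ha hb hc
    have h1 := congrArg (crossLm (φ (j+1) a b c)) h0
    rw [map_zero] at h1
    rw [delSum3] at h1
    rw [map_sum] at h1
    rw [show (∑ j' ∈ Finset.range N, ∑ a' ∈ Finset.range A, ∑ b' ∈ Finset.range B,
        ∑ c' ∈ Finset.range C, ∑ s : Fin 16,
          if cellNode3 j' a' b' c' s = (j+1, a, b, c) then
            cross3 (jet3 φ j' a' b' c' s) (pgrad3 L (jet3 φ j' a' b' c') s) else 0)
        = ∑ j' ∈ Finset.range N, crossLm (φ (j+1) a b c)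
            (∑ a' ∈ Finset.range A, ∑ b' ∈ Finset.range B,
              ∑ c' ∈ Finset.range C, ∑ s : Fin 16,
                if cellNode3 j' a' b' c' s = (j+1, a, b, c) then
                  pgrad3 L (jet3 φ j' a' b' c') s else 0) from ?_, h1]
    refine Finset.sum_congr rfl fun j' _ => ?_
    rw [map_sum]
    refine Finset.sum_congr rfl fun a' _ => ?_
    rw [map_sum]
    refine Finset.sum_congr rfl fun b' _ => ?_
    rw [map_sum]
    refine Finset.sum_congr rfl fun c' _ => ?_
    rw [map_sum]
    refine Finset.sum_congr rfl fun s _ => ?_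
    by_cases hcond : cellNode3 j' a' b' c' s = (j+1, a, b, c)
    · rw [if_pos hcond, if_pos hcond]
      have hjet : jet3 φ j' a' b' c' s = φ (j+1) a b c := by
        simp only [cellNode3, Prod.mk.injEq] at hcond
        obtain ⟨h1', h2', h3', h4'⟩ := hcond
        simp [jet3, h1', h2', h3', h4']
      rw [hjet]
      rfl
    · rw [if_neg hcond, if_neg hcond, map_zero]


end
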